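/- Let R > 0, let a < b be real numbers, and let u : ℝ × ℝ⁴ → ℝ be twice continuously differentiable with u(t,x) = 0 whenever |x| ≥ R, and suppose u satisfies the quadratic Klein–Gordon equation ∂²_t u(t,x) = Δ_x u(t,x) − u(t,x) + u(t,x)² for all (t,x) ∈ (a,b) × ℝ⁴, where Δ_x is the Laplacian in x. Then the function y(t) = ∫_{ℝ⁴} u(t,x)² dx is twice differentiable on (a,b) and y''(t) = 2∫ (∂_t u(t,x))² dx − 2∫ |∇_x u(t,x)|² dx − 2∫ u(t,x)² dx + 2∫ u(t,x)³ dx. -/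

import Mathlib

open MeasureTheory

local notation "E4" => EuclideanSpace ℝ (Fin 4)

lemma integ_of_supp' {R : ℝ} {f : E4 → ℝ} (hf : Continuous f)
    (h0 : ∀ x : E4, R ≤ ‖x‖ → f x = 0) : Integrable f := by
  apply hf.integrable_of_hasCompactSupport
  exact HasCompactSupport.intro (isCompact_closedBall 0 R) fun x hx =>
    h0 x (le_of_lt (by simpa [Metric.mem_closedBall, dist_zero_right, not_le] using hx))

lemma norm_sq_clm (f : E4 →L[ℝ] ℝ) :
    ‖f‖ ^ 2 = ∑ i : Fin 4, (f (EuclideanSpace.single i 1)) ^ 2 := by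
  set v : E4 := WithLp.toLp 2 (fun i => f (EuclideanSpace.single i 1)) with hv
  have hfv : f = innerSL ℝ v := by
    apply ContinuousLinearMap.ext
    intro w
    have hw : w = ∑ i : Fin 4, w i • EuclideanSpace.single i (1:ℝ) := by
      have := (EuclideanSpace.basisFun (Fin 4) ℝ).sum_repr w
      simpa [EuclideanSpace.basisFun_apply, EuclideanSpace.basisFun_repr] using this.symm
    rw [innerSL_apply_apply, PiLp.inner_apply]
    conv_lhs => rw [hw]
    simp [RCLike.inner_apply, hv, mul_comm]
  have : ‖f‖ = ‖v‖ := by rw [hfv, innerSL_apply_norm]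
  rw [this, EuclideanSpace.norm_eq, Real.sq_sqrt (by positivity)]
  simp [hv, sq_abs]

lemma key_deriv_integral {R : ℝ} (v v' : ℝ → E4 → ℝ)
    (hv' : Continuous fun p : ℝ × E4 => v' p.1 p.2)
    (hcont : ∀ t : ℝ, Continuous (v t))
    (h0 : ∀ (t : ℝ) (x : E4), R ≤ ‖x‖ → v t x = 0)
    (h0' : ∀ (t : ℝ) (x : E4), R ≤ ‖x‖ → v' t x = 0)
    (hd : ∀ (t : ℝ) (x : E4), HasDerivAt (fun s => v s x) (v' t x) t) (t₀ : ℝ) :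
    HasDerivAt (fun s => ∫ x, v s x) (∫ x, v' t₀ x) t₀ := by
  have hK : IsCompact ((Set.Icc (t₀ - 1) (t₀ + 1)) ×ˢ Metric.closedBall (0:E4) R) :=
    isCompact_Icc.prod (isCompact_closedBall _ _)
  obtain ⟨C, hC⟩ := hK.exists_bound_of_continuousOn hv'.continuousOn
  have hcont' : ∀ t : ℝ, Continuous (v' t) := fun t =>
    hv'.comp (continuous_const.prodMk continuous_id)
  refine (hasDerivAt_integral_of_dominated_loc_of_deriv_le (Metric.ball_mem_nhds t₀ zero_lt_one)
    (Filter.Eventually.of_forall fun t => (hcont t).aestronglyMeasurable)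
    (integ_of_supp' (hcont t₀) (h0 t₀))
    ((hcont' t₀).aestronglyMeasurable)
    (bound := (Metric.closedBall (0:E4) R).indicator fun _ => C)
    (Filter.Eventually.of_forall fun x => ?_)
    ?_
    (Filter.Eventually.of_forall fun x t _ => hd t x)).2
  · intro t ht
    by_cases hx : x ∈ Metric.closedBall (0:E4) R
    · rw [Set.indicator_of_mem hx]
      have ht' : t ∈ Set.Icc (t₀ - 1) (t₀ + 1) := by
        rw [Metric.mem_ball, Real.dist_eq] at ht
        constructor <;> [linarith [abs_lt.1 ht]; linarith [abs_lt.1 ht]]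
      exact hC (t, x) ⟨ht', hx⟩
    · rw [Set.indicator_of_notMem hx]
      have : R ≤ ‖x‖ := le_of_lt (by
        simpa [Metric.mem_closedBall, dist_zero_right, not_le] using hx)
      simp [h0' t x this]
  · exact (integrableOn_const (measure_closedBall_lt_top.ne)).integrable_indicator
      measurableSet_closedBall

/-- Virial identity: if `u` is `C²` on `ℝ × ℝ⁴`, vanishes for `|x| ≥ R`, and solves the
quadratic Klein–Gordon equation `∂²ₜu = Δu - u + u²` on `(a,b) × ℝ⁴`, then
`y(t) = ∫ u(t,x)² dx` is twice differentiable on `(a,b)` with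
`y'' = 2∫(∂ₜu)² - 2∫|∇u|² - 2∫u² + 2∫u³`. -/
theorem virial_identity (R : ℝ) (hR : 0 < R) (a b : ℝ) (hab : a < b)
    (u : ℝ → EuclideanSpace ℝ (Fin 4) → ℝ)
    (hu : ContDiff ℝ 2 (fun p : ℝ × EuclideanSpace ℝ (Fin 4) => u p.1 p.2))
    (hsupp : ∀ t : ℝ, ∀ x : EuclideanSpace ℝ (Fin 4), R ≤ ‖x‖ → u t x = 0)
    (heq : ∀ t ∈ Set.Ioo a b, ∀ x : EuclideanSpace ℝ (Fin 4),
      deriv (fun s => deriv (fun s' => u s' x) s) t =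
        (∑ i : Fin 4, fderiv ℝ (fun y => fderiv ℝ (u t) y (EuclideanSpace.single i 1)) x
          (EuclideanSpace.single i 1)) - u t x + u t x ^ 2) :
    ∀ t ∈ Set.Ioo a b,
      DifferentiableAt ℝ (fun s => ∫ x, u s x ^ 2) t ∧
      DifferentiableAt ℝ (deriv (fun s => ∫ x, u s x ^ 2)) t ∧
      deriv (deriv (fun s => ∫ x, u s x ^ 2)) t =
        2 * (∫ x, (deriv (fun s => u s x) t) ^ 2)
          - 2 * (∫ x, ‖fderiv ℝ (u t) x‖ ^ 2)
          - 2 * (∫ x, u t x ^ 2)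
          + 2 * (∫ x, u t x ^ 3) := by
  -- notation for the joint function and its time derivatives
  set U : ℝ × E4 → ℝ := fun p => u p.1 p.2 with hU_def
  set Ut : ℝ × E4 → ℝ := fun p => fderiv ℝ U p (1, 0) with hUt_def
  set Utt : ℝ × E4 → ℝ := fun p => fderiv ℝ Ut p (1, 0) with hUtt_def
  have hUt_cd : ContDiff ℝ 1 Ut :=
    (hu.fderiv_right (by norm_num)).clm_apply contDiff_const
  have hUtt_cont : Continuous Utt :=
    ((hUt_cd.fderiv_right (m := 0) (by norm_num)).clm_apply contDiff_const).continuous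
  have hd1 : ∀ (t : ℝ) (x : E4), HasDerivAt (fun s => u s x) (Ut (t, x)) t := by
    intro t x
    have h1 : HasFDerivAt U (fderiv ℝ U (t, x)) (t, x) :=
      ((hu.differentiable (by norm_num)) (t, x)).hasFDerivAt
    have h2 : HasDerivAt (fun s : ℝ => (s, x)) ((1:ℝ), (0:E4)) t :=
      (hasDerivAt_id t).prodMk (hasDerivAt_const t x)
    exact h1.comp_hasDerivAt t h2
  have hd2 : ∀ (t : ℝ) (x : E4), HasDerivAt (fun s => Ut (s, x)) (Utt (t, x)) t := by
    intro t x
    have h1 : HasFDerivAt Ut (fderiv ℝ Ut (t, x)) (t, x) :=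
      ((hUt_cd.differentiable one_ne_zero) (t, x)).hasFDerivAt
    have h2 : HasDerivAt (fun s : ℝ => (s, x)) ((1:ℝ), (0:E4)) t :=
      (hasDerivAt_id t).prodMk (hasDerivAt_const t x)
    exact h1.comp_hasDerivAt t h2
  have hsUt : ∀ (t : ℝ) (x : E4), R ≤ ‖x‖ → Ut (t, x) = 0 := by
    intro t x hx
    have h : (fun s => u s x) = fun _ => (0:ℝ) := funext fun s => hsupp s x hx
    have h2 := (hd1 t x).deriv
    rw [h, deriv_const] at h2
    exact h2.symm
  have hsUtt : ∀ (t : ℝ) (x : E4), R ≤ ‖x‖ → Utt (t, x) = 0 := by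
    intro t x hx
    have h : (fun s => Ut (s, x)) = fun _ => (0:ℝ) := funext fun s => hsUt s x hx
    have h2 := (hd2 t x).deriv
    rw [h, deriv_const] at h2
    exact h2.symm
  have hUcont : Continuous U := hu.continuous
  have hUtcont : Continuous Ut := hUt_cd.continuous
  have hmk : ∀ t : ℝ, Continuous fun x : E4 => (t, x) :=
    fun t => continuous_const.prodMk continuous_id
  -- first differentiation under the integral sign
  have S1 : ∀ t₀ : ℝ, HasDerivAt (fun s => ∫ x, u s x ^ 2)
      (∫ x, 2 * u t₀ x * Ut (t₀, x)) t₀ := by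
    refine key_deriv_integral (R := R) (fun t x => u t x ^ 2)
      (fun t x => 2 * u t x * Ut (t, x)) ?_ ?_ ?_ ?_ ?_
    · exact (continuous_const.mul hUcont).mul (hUtcont.comp continuous_id)
    · exact fun t => (hUcont.comp (hmk t)).pow 2
    · intro t x hx; simp [hsupp t x hx]
    · intro t x hx; simp [hsupp t x hx]
    · intro t x
      have := (hd1 t x).pow 2
      convert this using 1
      · rfl
      · rfl
      · rfl
      push_cast; ring
  -- second differentiation under the integral sign
  have S2 : ∀ t₀ : ℝ, HasDerivAt (fun s => ∫ x, 2 * u s x * Ut (s, x))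
      (∫ x, (2 * Ut (t₀, x) ^ 2 + 2 * u t₀ x * Utt (t₀, x))) t₀ := by
    refine key_deriv_integral (R := R) (fun t x => 2 * u t x * Ut (t, x))
      (fun t x => 2 * Ut (t, x) ^ 2 + 2 * u t x * Utt (t, x)) ?_ ?_ ?_ ?_ ?_
    · exact (continuous_const.mul ((hUtcont.comp continuous_id).pow 2)).add
        ((continuous_const.mul hUcont).mul (hUtt_cont.comp continuous_id))
    · exact fun t => (continuous_const.mul (hUcont.comp (hmk t))).mul (hUtcont.comp (hmk t))
    · intro t x hx; simp [hsupp t x hx]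
    · intro t x hx; simp [hsupp t x hx, hsUt t x hx]
    · intro t x
      have h := ((hd1 t x).mul (hd2 t x)).const_mul 2
      convert h using 1
      · rfl
      · rfl
      · funext s; rw [Pi.mul_apply]; ring
      · ring
  intro t ht
  have hderiv_y : deriv (fun s => ∫ x, u s x ^ 2) = fun s => ∫ x, 2 * u s x * Ut (s, x) :=
    funext fun s => (S1 s).deriv
  refine ⟨(S1 t).differentiableAt, ?_, ?_⟩
  · rw [hderiv_y]; exact (S2 t).differentiableAt
  rw [hderiv_y, (S2 t).deriv]
  -- now prove the integral identity at the fixed time t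
  -- notation
  set g : Fin 4 → E4 → ℝ := fun i y => fderiv ℝ (u t) y (EuclideanSpace.single i 1) with hg_def
  have hf2 : ContDiff ℝ 2 (u t) := hu.comp (contDiff_const.prodMk contDiff_id)
  have hg_cd : ∀ i, ContDiff ℝ 1 (g i) :=
    fun i => (hf2.fderiv_right (by norm_num)).clm_apply contDiff_const
  have hgd_cont : ∀ i, Continuous fun x => fderiv ℝ (g i) x (EuclideanSpace.single i 1) :=
    fun i => (((hg_cd i).fderiv_right (m := 0) (by norm_num)).clm_apply contDiff_const).continuous
  have cf : HasCompactSupport (u t) :=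
    HasCompactSupport.intro (isCompact_closedBall 0 R) fun x hx =>
      hsupp t x (le_of_lt (by simpa [Metric.mem_closedBall, dist_zero_right, not_le] using hx))
  have cg : ∀ i, HasCompactSupport (g i) := by
    intro i
    show HasCompactSupport fun y => fderiv ℝ (u t) y (EuclideanSpace.single i 1)
    exact cf.fderiv_apply ℝ _
  -- the PDE rewrites Utt
  have hUtt_pde : ∀ x : E4, Utt (t, x) =
      (∑ i : Fin 4, fderiv ℝ (g i) x (EuclideanSpace.single i 1)) - u t x + u t x ^ 2 := by
    intro x
    have h3 : (fun s => deriv (fun s' => u s' x) s) = fun s => Ut (s, x) :=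
      funext fun s => (hd1 s x).deriv
    rw [← heq t ht x, h3, (hd2 t x).deriv]
  -- integrability facts
  have IUt2 : Integrable (fun x => Ut (t, x) ^ 2) :=
    integ_of_supp' (R := R) ((hUtcont.comp (hmk t)).pow 2) (fun x hx => by simp [hsUt t x hx])
  have Iu2 : Integrable (fun x => u t x ^ 2) :=
    integ_of_supp' (R := R) ((hUcont.comp (hmk t)).pow 2) (fun x hx => by simp [hsupp t x hx])
  have Iu3 : Integrable (fun x => u t x ^ 3) :=
    integ_of_supp' (R := R) ((hUcont.comp (hmk t)).pow 3) (fun x hx => by simp [hsupp t x hx])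
  have Iug : ∀ i, Integrable (fun x => u t x * fderiv ℝ (g i) x (EuclideanSpace.single i 1)) :=
    fun i => integ_of_supp' (R := R) ((hUcont.comp (hmk t)).mul (hgd_cont i))
      (fun x hx => by simp [hsupp t x hx])
  have Ig2 : ∀ i, Integrable (fun x => g i x * g i x) := fun i =>
    (((hg_cd i).continuous).mul ((hg_cd i).continuous)).integrable_of_hasCompactSupport
      ((cg i).mul_right)
  have Igu : ∀ i, Integrable (fun x => g i x * g i x) := Ig2
  -- integration by parts for each coordinate
  have hIBP : ∀ i : Fin 4,
      ∫ x, u t x * fderiv ℝ (g i) x (EuclideanSpace.single i 1) = - ∫ x, g i x * g i x := by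
    intro i
    have h1 : Integrable (fun x => fderiv ℝ (u t) x (EuclideanSpace.single i 1) * g i x) :=
      Ig2 i
    have h3 : Integrable (fun x => u t x * g i x) :=
      integ_of_supp' (R := R) ((hUcont.comp (hmk t)).mul ((hg_cd i).continuous))
        (fun x hx => by simp [hsupp t x hx])
    have := integral_mul_fderiv_eq_neg_fderiv_mul_of_integrable (f := u t) (g := g i)
      (v := EuclideanSpace.single i 1) h1 (Iug i) h3
      (fun x _ => hf2.differentiable (by norm_num) x) (fun x _ => (hg_cd i).differentiable one_ne_zero x)
    simpa using this
  -- rewrite the integrand using the PDE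
  have hint_eq : (fun x => (2 * Ut (t, x) ^ 2 + 2 * u t x * Utt (t, x))) =
      fun x => ((2 * Ut (t, x) ^ 2 +
        2 * (∑ i : Fin 4, u t x * fderiv ℝ (g i) x (EuclideanSpace.single i 1))) -
        2 * u t x ^ 2) + 2 * u t x ^ 3 := by
    funext x
    rw [hUtt_pde x, ← Finset.mul_sum]
    ring
  rw [hint_eq]
  have IA : Integrable (fun x => 2 * Ut (t, x) ^ 2) := IUt2.const_mul 2
  have IB : Integrable (fun x : E4 =>
      2 * ∑ i : Fin 4, u t x * fderiv ℝ (g i) x (EuclideanSpace.single i 1)) :=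
    (integrable_finset_sum _ fun i _ => Iug i).const_mul 2
  have IC : Integrable (fun x => 2 * u t x ^ 2) := Iu2.const_mul 2
  have ID : Integrable (fun x => 2 * u t x ^ 3) := Iu3.const_mul 2
  have IAB : Integrable (fun x : E4 => 2 * Ut (t, x) ^ 2 +
      2 * ∑ i : Fin 4, u t x * fderiv ℝ (g i) x (EuclideanSpace.single i 1)) := IA.add IB
  have IABC : Integrable (fun x : E4 => 2 * Ut (t, x) ^ 2 +
      2 * (∑ i : Fin 4, u t x * fderiv ℝ (g i) x (EuclideanSpace.single i 1)) -
      2 * u t x ^ 2) := IAB.sub IC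
  rw [integral_add IABC ID, integral_sub IAB IC, integral_add IA IB,
    integral_const_mul, integral_const_mul, integral_const_mul, integral_const_mul,
    integral_finset_sum _ fun i _ => Iug i]
  have hsum : (∑ i : Fin 4, ∫ x, u t x * fderiv ℝ (g i) x (EuclideanSpace.single i 1)) =
      - ∫ x, ‖fderiv ℝ (u t) x‖ ^ 2 := by
    have h1 : (∑ i : Fin 4, ∫ x, u t x * fderiv ℝ (g i) x (EuclideanSpace.single i 1)) =
        ∑ i : Fin 4, -(∫ x, g i x * g i x) := Finset.sum_congr rfl fun i _ => hIBP i
    have hptwise : (fun x : E4 => ∑ i : Fin 4, g i x * g i x) =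
        fun x => ‖fderiv ℝ (u t) x‖ ^ 2 := by
      funext x
      rw [norm_sq_clm (fderiv ℝ (u t) x)]
      exact Finset.sum_congr rfl fun i _ => by rw [pow_two]
    rw [h1, Finset.sum_neg_distrib, ← integral_finset_sum _ fun i _ => Ig2 i, hptwise]
  rw [hsum]
  have hderiv_rw : (fun x : E4 => (deriv (fun s => u s x) t) ^ 2) = fun x => Ut (t, x) ^ 2 :=
    funext fun x => by rw [(hd1 t x).deriv]
  rw [hderiv_rw]
  ring
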